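/- Let g : 2^ω → ℝ be lower semicontinuous but not continuous, and let f : 2^ω → ℝ be Baire 1. Then f ≤_m g if and only if f is lower semicontinuous. -/

import Mathlib

/-- Cantor space `2^ω`. -/
abbrev Cantor : Type := ℕ → Bool

/-- A bit `b` is a correct answer to the question `f A ≲_ε p`. -/
def CorrectAnswer (f : Cantor → ℝ) (A : Cantor) (p ε : ℚ) (b : Bool) : Prop :=
  (b = true ∧ f A < (p : ℝ) + (ε : ℝ)) ∨ (b = false ∧ (p : ℝ) - (ε : ℝ) < f A)

/-- Topological m-reducibility `f ≤_m g`. -/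
def MReducible (f g : Cantor → ℝ) : Prop :=
  ∀ p ε : ℚ, 0 < ε → ∃ q δ : ℚ, 0 < δ ∧ ∃ k : Cantor → Cantor, Continuous k ∧
    ∀ A b, CorrectAnswer g (k A) q δ b → CorrectAnswer f A p ε b

/-- `f` is Baire class 1: a pointwise limit of continuous functions. -/
def BaireOne (f : Cantor → ℝ) : Prop :=
  ∃ F : ℕ → Cantor → ℝ, (∀ n, Continuous (F n)) ∧
    ∀ A, Filter.Tendsto (fun n => F n A) Filter.atTop (nhds (f A))

/-- The Bourgain derivation sequence `P^ν_{f,p,ε}`. -/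
noncomputable def derivSeq (f : Cantor → ℝ) (p ε : ℚ) (ν : Ordinal.{0}) : Set Cantor :=
  Ordinal.limitRecOn ν Set.univ
    (fun _ P => P \ ⋃₀ {U : Set Cantor | IsOpen U ∧
        (f '' (P ∩ U) ⊆ Set.Iio ((p : ℝ) + (ε : ℝ)) ∨
         f '' (P ∩ U) ⊆ Set.Ioi ((p : ℝ) - (ε : ℝ)))})
    (fun o _ ih => ⋂ (μ : {μ : Ordinal.{0} // μ < o}), ih μ.1 μ.2)

/-- `α(f,p,ε)`: the least ordinal `ν` with `P^ν_{f,p,ε} = ∅`. -/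
noncomputable def bAlpha (f : Cantor → ℝ) (p ε : ℚ) : Ordinal.{0} :=
  sInf {ν | derivSeq f p ε ν = ∅}

/-- The Bourgain rank `|f|_α`. -/
noncomputable def bourgainRank (f : Cantor → ℝ) : Ordinal.{0} :=
  ⨆ x : ℚ × {ε : ℚ // 0 < ε}, bAlpha f x.1 x.2.1

/-- Cylinder: sequences agreeing with `A` on the first `n` coordinates. -/
def MCyl (A : Cantor) (n : ℕ) : Set Cantor := {B | ∀ i < n, B i = A i}

lemma mcyl_isOpen (A : Cantor) (n : ℕ) : IsOpen (MCyl A n) := by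
  have : MCyl A n = Set.pi (Set.Iio n) (fun i => {A i}) := by
    ext B; simp [MCyl, Set.mem_pi]
  rw [this]
  exact isOpen_set_pi (Set.finite_Iio n) (fun a _ => isOpen_discrete _)

lemma mcyl_self (A : Cantor) (n : ℕ) : A ∈ MCyl A n := fun _ _ => rfl

lemma mcyl_mem_nhds (A : Cantor) (n : ℕ) : MCyl A n ∈ nhds A :=
  (mcyl_isOpen A n).mem_nhds (mcyl_self A n)

lemma exists_mcyl_subset {U : Set Cantor} (hU : IsOpen U) {A : Cantor} (hA : A ∈ U) :
    ∃ n, MCyl A n ⊆ U := by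
  obtain ⟨I, u, h1, h2⟩ := isOpen_pi_iff.1 hU A hA
  refine ⟨(I.sup id) + 1, fun B hB => h2 ?_⟩
  intro i hi
  have hiI : i ∈ I := hi
  have : B i = A i := hB i (Nat.lt_succ_of_le (Finset.le_sup (f := id) hiI))
  rw [this]
  exact (h1 i hiI).2

/-- For `g` lower semicontinuous but not continuous and `f` Baire 1:
`f ≤_m g` iff `f` is lower semicontinuous. -/
theorem mReducible_lsc_iff (f g : Cantor → ℝ) (hg : LowerSemicontinuous g)
    (hgc : ¬ Continuous g) (hf : BaireOne f) :
    MReducible f g ↔ LowerSemicontinuous f := by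
  classical
  constructor
  · -- f ≤_m g with g LSC implies f LSC
    intro hred x y hy
    obtain ⟨u, hyu, huf⟩ := exists_rat_btwn hy
    obtain ⟨v, huv, hvf⟩ := exists_rat_btwn huf
    have huv' : u < v := by exact_mod_cast huv
    set p : ℚ := (u + v) / 2 with hp
    set ε : ℚ := (v - u) / 2 with he
    have hε : 0 < ε := by rw [he]; linarith
    have hpe1 : (p : ℝ) - (ε : ℝ) = (u : ℝ) := by push_cast [hp, he]; ring
    have hpe2 : (p : ℝ) + (ε : ℝ) = (v : ℝ) := by push_cast [hp, he]; ring
    obtain ⟨q, δ, hδ, k, hk, hcor⟩ := hred p ε hε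
    have hδ' : (0 : ℝ) < (δ : ℝ) := by exact_mod_cast hδ
    have hgk : LowerSemicontinuous (g ∘ k) := fun x y hy => hk.continuousAt.tendsto.eventually (hg (k x) y hy)
    have hx : (q : ℝ) - (δ : ℝ) < g (k x) := by
      by_contra hcon
      push_neg at hcon
      have : CorrectAnswer g (k x) q δ true := Or.inl ⟨rfl, by linarith⟩
      have := hcor x true this
      rcases this with ⟨_, hlt⟩ | ⟨hb, _⟩
      · rw [hpe2] at hlt; linarith
      · exact Bool.noConfusion hb
    have := hgk x ((q : ℝ) - (δ : ℝ)) hx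
    filter_upwards [this] with z hz
    have : CorrectAnswer g (k z) q δ false := Or.inr ⟨rfl, hz⟩
    have := hcor z false this
    rcases this with ⟨hb, _⟩ | ⟨_, hgt⟩
    · exact Bool.noConfusion hb
    · rw [hpe1] at hgt
      calc y < (u : ℝ) := hyu
        _ < f z := hgt
  · -- f LSC implies f ≤_m g
    intro hl p ε hε
    -- find a point of discontinuity of g and a bad value
    rw [continuous_iff_continuousAt] at hgc
    push_neg at hgc
    obtain ⟨x₀, hx₀⟩ := hgc
    rw [continuousAt_iff_lower_upperSemicontinuousAt] at hx₀
    have husc : ¬ UpperSemicontinuousAt g x₀ := fun h => hx₀ ⟨hg x₀, h⟩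
    rw [upperSemicontinuousAt_iff] at husc
    push_neg at husc
    obtain ⟨y, hy, hfreq⟩ := husc
    replace hfreq : ∃ᶠ x in nhds x₀, ¬ g x < y := hfreq.mono fun _ h => not_lt.2 h
    obtain ⟨r, hr1, hr2⟩ := exists_rat_btwn hy
    obtain ⟨s, hs1, hs2⟩ := exists_rat_btwn hr2
    have hrs : r < s := by exact_mod_cast hs1
    set q : ℚ := (r + s) / 2 with hq
    set δ : ℚ := (s - r) / 2 with hd
    have hδ : 0 < δ := by rw [hd]; linarith
    have hqd1 : (q : ℝ) - (δ : ℝ) = (r : ℝ) := by push_cast [hq, hd]; ring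
    have hqd2 : (q : ℝ) + (δ : ℝ) = (s : ℝ) := by push_cast [hq, hd]; ring
    -- a sequence converging to x₀ on which g is large
    obtain ⟨w, hw, hwg⟩ := Filter.exists_seq_forall_of_frequently hfreq
    simp only [not_lt] at hwg
    -- the open set where the answer false is correct
    set U : Set Cantor := {A | (p : ℝ) - (ε : ℝ) < f A} with hUdef
    have hU : IsOpen U := hl.isOpen_preimage _
    -- the reduction map
    have hex : ∀ {A : Cantor}, A ∈ U → ∃ n, MCyl A n ⊆ U := fun hA =>
      exists_mcyl_subset hU hA
    set k : Cantor → Cantor :=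
      fun A => if hA : A ∈ U then w (Nat.find (hex hA)) else x₀ with hkdef
    refine ⟨q, δ, hδ, k, ?_, ?_⟩
    · -- continuity of k
      rw [continuous_iff_continuousAt]
      intro A
      by_cases hA : A ∈ U
      · -- k is locally constant near A
        set n := Nat.find (hex hA) with hn
        have hcylU : MCyl A n ⊆ U := Nat.find_spec (hex hA)
        have hconst : ∀ A' ∈ MCyl A n, k A' = k A := by
          intro A' hA'
          have hA'U : A' ∈ U := hcylU hA'
          have heq : Nat.find (hex hA'U) = n := by
            apply le_antisymm
            · apply Nat.find_min'
              intro B hB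
              apply hcylU
              intro i hi
              rw [hB i hi]
              exact hA' i hi
            · by_contra hlt
              push_neg at hlt
              have hminU : MCyl A' (Nat.find (hex hA'U)) ⊆ U :=
                Nat.find_spec (hex hA'U)
              refine Nat.find_min (hex hA) (m := Nat.find (hex hA'U)) hlt ?_
              intro B hB
              apply hminU
              intro i hi
              rw [hB i hi]
              exact (hA' i (lt_trans hi hlt)).symm
          simp only [hkdef, dif_pos hA'U, dif_pos hA, heq, hn]
        have hev : k =ᶠ[nhds A] (fun _ => k A) :=
          Filter.eventually_of_mem (mcyl_mem_nhds A n) hconst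
        exact (continuousAt_const : ContinuousAt (fun _ => k A) A).congr hev.symm
      · -- A ∉ U : k A = x₀, and nearby values of k are close to x₀
        have hkA : k A = x₀ := by simp only [hkdef, dif_neg hA]
        rw [ContinuousAt, hkA]
        intro W hW
        obtain ⟨N, hN⟩ := (Filter.tendsto_atTop'.1 hw) W hW
        rw [Filter.mem_map]
        apply Filter.mem_of_superset (mcyl_mem_nhds A N)
        intro A' hA'
        by_cases hA'U : A' ∈ U
        · have hk' : k A' = w (Nat.find (hex hA'U)) := by
            simp only [hkdef, dif_pos hA'U]
          have hbig : N ≤ Nat.find (hex hA'U) := by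
            by_contra hlt
            push_neg at hlt
            apply hA
            apply Nat.find_spec (hex hA'U)
            intro i hi
            exact (hA' i (lt_trans hi hlt)).symm
          rw [Set.mem_preimage, hk']
          exact hN _ hbig
        · have : k A' = x₀ := by simp only [hkdef, dif_neg hA'U]
          rw [Set.mem_preimage, this]
          exact mem_of_mem_nhds hW
    · -- correctness
      intro A b hc
      have hεR : (0 : ℝ) < (ε : ℝ) := by exact_mod_cast hε
      rcases hc with ⟨hb, hlt⟩ | ⟨hb, hgt⟩
      · -- b = true : g (k A) < q + δ = s
        subst hb
        by_cases hA : A ∈ U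
        · exfalso
          have : k A = w (Nat.find (hex hA)) := by simp only [hkdef, dif_pos hA]
          rw [this, hqd2] at hlt
          have := hwg (Nat.find (hex hA))
          linarith
        · have : ¬ ((p : ℝ) - (ε : ℝ) < f A) := hA
          push_neg at this
          exact Or.inl ⟨rfl, by linarith⟩
      · -- b = false : g (k A) > q - δ = r
        subst hb
        by_cases hA : A ∈ U
        · exact Or.inr ⟨rfl, hA⟩
        · exfalso
          have : k A = x₀ := by simp only [hkdef, dif_neg hA]
          rw [this, hqd1] at hgt
          linarith
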